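/- Let $n\ge 1$ be an integer, let $\zeta = e^{2\pi i/n}$, and for $0\le u, v < n$ with $nu+v \le n^2-1$ define $c_{nu+v} = \sum_{0\le m, m+nu+v < n^2} b_m \overline{b_{m+nu+v}}$ where $b_{nj+k} = \zeta^{jk}$ for $0\le j,k < n$ are the coefficients of $h_n$. Then for every integer $u$ with $1\le u\le n-1$, one has $c_{nu} = 0$. -/

import Mathlib

/-- The coefficients of `h_n`: `b_{nj+k} = ζ^{jk}` with `ζ = e^{2πi/n}`, for `0 ≤ j,k < n`;
here `j = m / n` and `k = m % n` for an index `m = nj + k`. -/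
noncomputable def hCoef (n : ℕ) (m : ℕ) : ℂ :=
  Complex.exp (2 * Real.pi * Complex.I / n) ^ ((m / n) * (m % n))

/-- The aperiodic autocorrelations `c_u = ∑_{0 ≤ m, m+u < n²} b_m conj(b_{m+u})` of the
coefficient sequence of `h_n` (this is `0` for `u ≥ n²`). -/
noncomputable def hCorr (n : ℕ) (u : ℕ) : ℂ :=
  ∑ m ∈ Finset.range (n ^ 2 - u), hCoef n m * (starRingEnd ℂ) (hCoef n (m + u))

/-- For `1 ≤ u ≤ n-1`, the autocorrelation `c_{nu}` of `h_n` vanishes. -/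
theorem hCorr_mul_eq_zero (n : ℕ) (hn : 1 ≤ n) (u : ℕ) (hu1 : 1 ≤ u) (hu2 : u ≤ n - 1) :
    hCorr n (n * u) = 0 := by
  have hn2 : 2 ≤ n := by omega
  have hun : u < n := by omega
  set ζ : ℂ := Complex.exp (2 * Real.pi * Complex.I / n) with hζ
  have hprim : IsPrimitiveRoot ζ n := Complex.isPrimitiveRoot_exp n (by omega)
  have hζ0 : ζ ≠ 0 := Complex.exp_ne_zero _
  have hconj : (starRingEnd ℂ) ζ = ζ⁻¹ := by
    rw [hζ, ← Complex.exp_conj, ← Complex.exp_neg]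
    congr 1
    simp [map_div₀, Complex.conj_I, map_ofNat]
    ring
  set w : ℂ := ζ⁻¹ ^ u with hw
  have key : ∀ m, hCoef n m * (starRingEnd ℂ) (hCoef n (m + n * u)) = w ^ (m % n) := by
    intro m
    have h1 : (m + n * u) / n = m / n + u := by
      rw [Nat.add_mul_div_left _ _ (by omega : 0 < n)]
    have h2 : (m + n * u) % n = m % n := Nat.add_mul_mod_self_left m n u
    rw [hCoef, hCoef, h1, h2, map_pow, hconj, add_mul, pow_add, ← mul_assoc,
      inv_pow, mul_inv_cancel₀ (pow_ne_zero _ hζ0), one_mul, pow_mul]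
  have hrange : n ^ 2 - n * u = n * (n - u) := by
    rw [pow_two, Nat.mul_sub]
  have per : ∀ t : ℕ, ∑ m ∈ Finset.range (n * t), w ^ (m % n)
      = t * ∑ k ∈ Finset.range n, w ^ k := by
    intro t
    induction t with
    | zero => simp
    | succ t ih =>
      rw [Nat.mul_succ, Finset.sum_range_add, ih]
      have hc : ∀ i ∈ Finset.range n, w ^ ((n * t + i) % n) = w ^ i := by
        intro i hi
        rw [Nat.mul_add_mod, Nat.mod_eq_of_lt (Finset.mem_range.mp hi)]
      rw [Finset.sum_congr rfl hc]
      push_cast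
      ring
  have hwn : w ^ n = 1 := by
    rw [hw, ← pow_mul, mul_comm, pow_mul, inv_pow, hprim.pow_eq_one, inv_one, one_pow]
  have hw1 : w ≠ 1 := hprim.inv.pow_ne_one_of_pos_of_lt (by omega : u ≠ 0) hun
  have hgeom : ∑ k ∈ Finset.range n, w ^ k = 0 := by
    rw [geom_sum_eq hw1, hwn, sub_self, zero_div]
  rw [hCorr, Finset.sum_congr rfl (fun m _ => key m), hrange, per, hgeom, mul_zero]
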